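/- Let α be a nonzero integer, β ∈ (0, 1/2), δ > 0, P > 1, and f : [0,∞) → ℂ with |f(z)| ≤ M e^{-βz}(1 + δ^{-1} φ_P(δ^{-1}z)) for all z ≥ 0, where φ_P(z) = 1/(1+z^P). Let φ(z) = -(1/(2|α|)) ∫_0^∞ (e^{-|α||x-z|} - e^{-|α|(x+z)}) f(x) dx be the solution of φ'' - α²φ = f with φ(0)=0 decaying at infinity. Then there is a constant C, independent of α and δ, with |α| sup_{z≥0}|φ(z)|e^{βz} + sup_{z≥0}|φ'(z)|e^{βz} ≤ C M. -/

import Mathlib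

open MeasureTheory Set

namespace LaplaceBLAux

lemma exp_lip {u v c : ℝ} (hu : u ≤ c) (hv : v ≤ c) :
    |Real.exp u - Real.exp v| ≤ Real.exp c * |u - v| := by
  wlog h : u ≤ v generalizing u v
  · rw [abs_sub_comm, abs_sub_comm u v]; exact this hv hu (le_of_not_ge h)
  have h1 : Real.exp u = Real.exp v * Real.exp (u - v) := by
    rw [← Real.exp_add]; ring_nf
  have h2 : u - v + 1 ≤ Real.exp (u - v) := Real.add_one_le_exp (u - v)
  have h3 : Real.exp v ≤ Real.exp c := Real.exp_le_exp.mpr hv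
  have h4 : Real.exp (u - v) ≤ 1 := Real.exp_le_one_iff.mpr (by linarith)
  have h5 : (0:ℝ) < Real.exp v := Real.exp_pos v
  rw [abs_of_nonpos (by nlinarith), abs_of_nonpos (by linarith)]
  nlinarith

lemma phiP_integrable {P δ : ℝ} (hP : 1 < P) (hδ : 0 < δ) :
    IntegrableOn (fun x : ℝ => (1 + (x/δ) ^ P)⁻¹) (Ioi 0) := by
  have hcont : Continuous fun x : ℝ => 1 + (x/δ) ^ P :=
    continuous_const.add ((Real.continuous_rpow_const (by linarith)).comp
      (continuous_id.div_const δ))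
  have hmeas : Measurable fun x : ℝ => (1 + (x/δ) ^ P)⁻¹ := hcont.measurable.inv
  have h1 : IntegrableOn (fun x : ℝ => (1 + (x/δ) ^ P)⁻¹) (Ioc 0 δ) := by
    refine Integrable.mono' (g := fun _ => (1:ℝ))
      (integrableOn_const measure_Ioc_lt_top.ne) hmeas.aestronglyMeasurable ?_
    filter_upwards [ae_restrict_mem measurableSet_Ioc] with x hx
    have hq : 0 ≤ (x/δ) ^ P := Real.rpow_nonneg (div_nonneg hx.1.le hδ.le) _
    rw [Real.norm_eq_abs, abs_of_nonneg (inv_nonneg.mpr (by linarith))]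
    rw [inv_le_one_iff₀]
    right; linarith
  have h2 : IntegrableOn (fun x : ℝ => (1 + (x/δ) ^ P)⁻¹) (Ioi δ) := by
    have hint : IntegrableOn (fun x : ℝ => δ ^ P * x ^ (-P)) (Ioi δ) :=
      (integrableOn_Ioi_rpow_of_lt (by linarith : -P < -1) hδ).const_mul _
    refine Integrable.mono' hint hmeas.aestronglyMeasurable ?_
    filter_upwards [ae_restrict_mem measurableSet_Ioi] with x hx
    have hx0 : 0 < x := hδ.trans hx
    have hpow : 0 < (x/δ) ^ P := Real.rpow_pos_of_pos (by positivity) _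
    rw [Real.norm_eq_abs, abs_of_nonneg (inv_nonneg.mpr (by linarith))]
    have : (1 + (x/δ) ^ P)⁻¹ ≤ ((x/δ) ^ P)⁻¹ := by
      apply inv_anti₀ hpow; linarith
    refine this.trans (le_of_eq ?_)
    rw [Real.div_rpow hx0.le hδ.le, Real.rpow_neg hx0.le]
    field_simp
  have := h1.union h2
  rwa [Ioc_union_Ioi_eq_Ioi hδ.le] at this

lemma exp_kernel_cont (c z : ℝ) : Continuous fun x : ℝ => Real.exp (-c * |x - z|) :=
  (continuous_const.mul ((continuous_id.sub continuous_const).abs)).rexp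

lemma exp_kernel_integrable_Ioc {c z : ℝ} (hc : 0 < c) :
    IntegrableOn (fun x : ℝ => Real.exp (-c * |x - z|)) (Ioc 0 z) := by
  refine Integrable.mono' (g := fun _ => (1:ℝ))
    (integrableOn_const measure_Ioc_lt_top.ne)
    (exp_kernel_cont c z).measurable.aestronglyMeasurable ?_
  filter_upwards with x
  rw [Real.norm_eq_abs, abs_of_nonneg (Real.exp_pos _).le]
  exact Real.exp_le_one_iff.mpr (by nlinarith [abs_nonneg (x - z)])

lemma exp_kernel_integrable_Ioi_z {c z : ℝ} (hc : 0 < c) :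
    IntegrableOn (fun x : ℝ => Real.exp (-c * |x - z|)) (Ioi z) := by
  have h : IntegrableOn (fun x : ℝ => Real.exp (c*z) * Real.exp (-c*x)) (Ioi z) :=
    (exp_neg_integrableOn_Ioi z hc).const_mul _
  refine h.congr_fun (fun x hx => ?_) measurableSet_Ioi
  beta_reduce
  rw [← Real.exp_add, abs_of_pos (sub_pos.2 hx)]
  ring_nf

lemma exp_kernel_integrableOn {c z : ℝ} (hc : 0 < c) (hz : 0 ≤ z) :
    IntegrableOn (fun x : ℝ => Real.exp (-c * |x - z|)) (Ioi 0) := by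
  have := (exp_kernel_integrable_Ioc (z := z) hc).union (exp_kernel_integrable_Ioi_z hc)
  rwa [Ioc_union_Ioi_eq_Ioi hz] at this

lemma exp_kernel_integral_le {c z : ℝ} (hc : 0 < c) (hz : 0 ≤ z) :
    ∫ x in Ioi 0, Real.exp (-c * |x - z|) ≤ 2 / c := by
  rw [← Ioc_union_Ioi_eq_Ioi hz, setIntegral_union (Ioc_disjoint_Ioi le_rfl)
    measurableSet_Ioi (exp_kernel_integrable_Ioc hc) (exp_kernel_integrable_Ioi_z hc)]
  have h2 : ∫ x in Ioi z, Real.exp (-c * |x - z|) = 1 / c := by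
    have heq : EqOn (fun x => Real.exp (-c * |x - z|))
        (fun x => Real.exp (c*z) * Real.exp (-(c*x))) (Ioi z) := fun x hx => by
      show Real.exp (-c * |x - z|) = Real.exp (c*z) * Real.exp (-(c*x))
      rw [abs_of_pos (sub_pos.2 hx), show -c*(x-z) = c*z + -(c*x) by ring, Real.exp_add]
    rw [setIntegral_congr_fun measurableSet_Ioi heq]
    rw [integral_const_mul, integral_comp_mul_left_Ioi (fun u => Real.exp (-u)) z hc,
      integral_exp_neg_Ioi, smul_eq_mul]
    have hprod : Real.exp (c*z) * Real.exp (-(c*z)) = 1 := by rw [← Real.exp_add]; simp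
    have : (1:ℝ)/c = c⁻¹ := one_div c
    rw [this]
    linear_combination c⁻¹ * hprod
  have h1 : ∫ x in Ioc 0 z, Real.exp (-c * |x - z|) ≤ 1 / c := by
    have heq : EqOn (fun x => Real.exp (-c * |x - z|))
        (fun x => Real.exp (-(c*z)) * Real.exp (c*x)) (Ioc 0 z) := fun x hx => by
      show Real.exp (-c * |x - z|) = Real.exp (-(c*z)) * Real.exp (c*x)
      rw [abs_of_nonpos (by linarith [hx.2] : x - z ≤ 0),
        show -c*(-(x-z)) = -(c*z) + c*x by ring, Real.exp_add]
    rw [setIntegral_congr_fun measurableSet_Ioc heq]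
    rw [integral_const_mul, ← intervalIntegral.integral_of_le hz,
      intervalIntegral.integral_comp_mul_left (fun u => Real.exp u) hc.ne',
      integral_exp]
    have h3 : Real.exp (-(c*z)) * Real.exp (c*z) = 1 := by
      rw [← Real.exp_add]; simp
    have h4 : (0:ℝ) < Real.exp (-(c*z)) := Real.exp_pos _
    rw [smul_eq_mul, mul_zero, Real.exp_zero]
    rw [div_eq_mul_inv, one_mul]
    have hci : 0 < c⁻¹ := inv_pos.mpr hc
    calc Real.exp (-(c*z)) * (c⁻¹ * (Real.exp (c*z) - 1))
        = c⁻¹ * (1 - Real.exp (-(c*z))) := by nlinarith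
      _ ≤ c⁻¹ := by nlinarith
  linarith [h1, h2, show (1:ℝ)/c + 1/c = 2/c by ring]

end LaplaceBLAux

open LaplaceBLAux

set_option maxHeartbeats 1600000 in
/-- Inversion of `∂_z² - α²` on the half line with boundary layer data: for
`β ∈ (0,1/2)` and `P > 1` there is a constant `C`, independent of the nonzero
integer `α` and of `δ > 0`, such that if
`|f(z)| ≤ M e^{-βz}(1 + δ⁻¹ φ_P(δ⁻¹ z))` with `φ_P(y) = 1/(1+y^P)`, then the
solution `φ(z) = -(1/(2|α|)) ∫₀^∞ (e^{-|α||x-z|} - e^{-|α|(x+z)}) f(x) dx`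
of `φ'' - α²φ = f`, `φ(0) = 0`, satisfies
`|α| sup_{z≥0} |φ(z)|e^{βz} + sup_{z≥0} |φ'(z)|e^{βz} ≤ C M`. -/
theorem laplace_inverse_bl (β P : ℝ) (hβ0 : 0 < β) (hβ : β < 1/2) (hP : 1 < P) :
    ∃ C : ℝ, 0 < C ∧ ∀ δ : ℝ, 0 < δ → ∀ (α : ℤ), α ≠ 0 →
      ∀ (M : ℝ) (f : ℝ → ℂ), 0 ≤ M →
      (∀ z, 0 ≤ z →
        ‖f z‖ ≤ M * Real.exp (-β * z) * (1 + δ⁻¹ * (1 + (z/δ) ^ P)⁻¹)) →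
      ∀ φ : ℝ → ℂ,
        (φ = fun z => -(1 / (2 * |(α : ℝ)|) : ℝ) •
          ∫ x in Set.Ioi (0 : ℝ),
            (Real.exp (-|(α : ℝ)| * |x - z|) - Real.exp (-|(α : ℝ)| * (x + z))) • f x) →
        ∀ z z', 0 ≤ z → 0 ≤ z' →
          |(α : ℝ)| * ‖φ z‖ * Real.exp (β * z)
            + ‖deriv φ z'‖ * Real.exp (β * z') ≤ C * M := by
  classical
  set Cp : ℝ := ∫ y in Ioi (0:ℝ), (1 + (y/1) ^ P)⁻¹ with hCpdef
  have hCp0 : 0 ≤ Cp := by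
    refine setIntegral_nonneg measurableSet_Ioi (fun y hy => ?_)
    have : 0 ≤ (y/1) ^ P := Real.rpow_nonneg (div_nonneg (le_of_lt hy) zero_le_one) _
    exact inv_nonneg.mpr (by linarith)
  refine ⟨2*Cp + 9, by linarith, ?_⟩
  intro δ hδ α hα M f hM hf φ hφ z z' hz hz'
  set a : ℝ := |(α : ℝ)| with hadef
  have ha1 : 1 ≤ a := by
    have := Int.one_le_abs hα
    rw [hadef, ← Int.cast_abs]
    exact_mod_cast this
  have ha0 : 0 < a := lt_of_lt_of_le one_pos ha1
  -- the kernel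
  set k : ℝ → ℝ → ℝ := fun w x => Real.exp (-a * |x - w|) - Real.exp (-a * (x + w))
    with hkdef
  have hkcont : ∀ w, Continuous fun x => k w x := fun w =>
    (exp_kernel_cont a w).sub
      ((continuous_const.mul (continuous_id.add continuous_const)).rexp)
  have hkcont' : ∀ x, Continuous fun w => k w x := fun x =>
    ((continuous_const.mul ((continuous_const.sub continuous_id).abs)).rexp).sub
      ((continuous_const.mul (continuous_const.add continuous_id)).rexp)
  -- bad case: f not a.e. strongly measurable
  by_cases hmf : AEStronglyMeasurable f (volume.restrict (Ioi 0))
  swap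
  · have hφ0 : φ = fun _ => (0:ℂ) := by
      rw [hφ]
      funext w
      by_cases hw : w = 0
      · subst hw
        have heq : EqOn (fun x => (Real.exp (-a * |x - 0|) - Real.exp (-a * (x + 0))) • f x)
            (fun _ => (0:ℂ)) (Ioi 0) := fun x hx => by
          have hx0 : (0:ℝ) < x := hx
          simp [abs_of_pos hx0]
        rw [setIntegral_congr_fun measurableSet_Ioi heq, integral_zero, smul_zero]
      · have hkne : ∀ x ∈ Ioi (0:ℝ), k w x ≠ 0 := by
          intro x hx
          have hx0 : (0:ℝ) < x := hx
          rw [hkdef]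
          simp only
          intro hcon
          have : -a * |x - w| = -a * (x + w) := Real.exp_injective (by linarith [sub_eq_zero.mp hcon])
          have habs : |x - w| = x + w := by
            have := mul_left_cancel₀ (neg_ne_zero.mpr ha0.ne') this
            exact this
          have h2 : (x - w)^2 = (x + w)^2 := by rw [← sq_abs (x - w), habs]
          have : x * w = 0 := by nlinarith
          rcases mul_eq_zero.mp this with h | h
          · exact hx0.ne' h
          · exact hw h
        have hni : ¬ IntegrableOn
            (fun x => (Real.exp (-a * |x - w|) - Real.exp (-a * (x + w))) • f x)
            (Ioi 0) volume := by
          intro hint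
          apply hmf
          have haesm := hint.aestronglyMeasurable
          have hsm : AEStronglyMeasurable
              (fun x => (k w x)⁻¹ • ((Real.exp (-a * |x - w|) - Real.exp (-a * (x + w))) • f x))
              (volume.restrict (Ioi 0)) :=
            ((hkcont w).measurable.inv.aestronglyMeasurable).smul haesm
          refine hsm.congr ?_
          filter_upwards [ae_restrict_mem measurableSet_Ioi] with x hx
          have hkx := hkne x hx
          show (k w x)⁻¹ • (k w x • f x) = f x
          rw [smul_smul, inv_mul_cancel₀ hkx, one_smul]
        rw [integral_undef hni, smul_zero]
    rw [hφ0]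
    simp only [map_zero, mul_zero, zero_mul, deriv_const']
    have : (0:ℝ) ≤ (2*Cp + 9) * M := by positivity
    simpa using this
  -- good case
  -- the global bound function
  set g₀ : ℝ → ℝ := fun x => M * Real.exp (-β*x) * (1 + δ⁻¹ * (1 + (x/δ) ^ P)⁻¹) with hg₀def
  have hg₀nonneg : ∀ x, 0 ≤ x → 0 ≤ g₀ x := by
    intro x hx
    have : 0 ≤ (x/δ) ^ P := Real.rpow_nonneg (by positivity) _
    have h2 : 0 ≤ (1 + (x/δ) ^ P)⁻¹ := inv_nonneg.mpr (by linarith)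
    have h3 : (0:ℝ) < Real.exp (-β*x) := Real.exp_pos _
    have h4 : 0 ≤ δ⁻¹ := (inv_pos.mpr hδ).le
    rw [hg₀def]
    positivity
  have hqcont : Continuous fun x : ℝ => 1 + (x/δ) ^ P :=
    continuous_const.add ((Real.continuous_rpow_const (by linarith)).comp
      (continuous_id.div_const δ))
  have hqm : Measurable fun x : ℝ => (1 + (x/δ) ^ P)⁻¹ := hqcont.measurable.inv
  have hg₀meas : Measurable g₀ := by
    exact ((continuous_const.mul ((continuous_const.mul continuous_id).rexp)).measurable).mul
      (measurable_const.add (hqm.const_mul δ⁻¹))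
  have hg₀i : IntegrableOn g₀ (Ioi 0) := by
    have i1 : IntegrableOn (fun x : ℝ => M * Real.exp (-β*x)) (Ioi 0) :=
      (exp_neg_integrableOn_Ioi 0 hβ0).const_mul M
    have i2 : IntegrableOn (fun x : ℝ => (M*δ⁻¹) * (1 + (x/δ) ^ P)⁻¹) (Ioi 0) :=
      (phiP_integrable hP hδ).const_mul _
    have i3 : IntegrableOn
        (fun x : ℝ => M * Real.exp (-β*x) * (δ⁻¹ * (1 + (x/δ) ^ P)⁻¹)) (Ioi 0) := by
      refine Integrable.mono' i2 ?_ ?_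
      · exact (((continuous_const.mul ((continuous_const.mul continuous_id).rexp)).measurable).mul
          (hqm.const_mul δ⁻¹)).aestronglyMeasurable
      · filter_upwards [ae_restrict_mem measurableSet_Ioi] with x hx
        have hx0 : (0:ℝ) < x := hx
        have hq : 0 ≤ (1 + (x/δ) ^ P)⁻¹ := by
          have : 0 ≤ (x/δ) ^ P := Real.rpow_nonneg (by positivity) _
          exact inv_nonneg.mpr (by linarith)
        have he1 : Real.exp (-β*x) ≤ 1 := Real.exp_le_one_iff.mpr (by nlinarith)
        have he0 : (0:ℝ) < Real.exp (-β*x) := Real.exp_pos _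
        have h4 : (0:ℝ) ≤ δ⁻¹ := (inv_pos.mpr hδ).le
        rw [Real.norm_eq_abs, abs_of_nonneg (by positivity)]
        nlinarith [mul_nonneg (mul_nonneg hM h4) hq,
          mul_nonneg (mul_nonneg (mul_nonneg hM h4) hq) (by linarith : (0:ℝ) ≤ 1 - Real.exp (-β*x))]
    have hsum := i1.add i3
    refine IntegrableOn.congr_fun hsum (fun x _ => ?_) measurableSet_Ioi
    show M * Real.exp (-β*x) + M * Real.exp (-β*x) * (δ⁻¹ * (1 + (x/δ) ^ P)⁻¹) = g₀ x
    rw [hg₀def]; ring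
  have hfn : ∀ x ∈ Ioi (0:ℝ), ‖f x‖ ≤ g₀ x := by
    intro x hx
    have hx0 : (0:ℝ) < x := hx
    exact hf x hx0.le
  have hfi : IntegrableOn (fun x => ‖f x‖) (Ioi 0) := by
    refine Integrable.mono' hg₀i hmf.norm ?_
    filter_upwards [ae_restrict_mem measurableSet_Ioi] with x hx
    rw [Real.norm_eq_abs, abs_of_nonneg (norm_nonneg _)]
    exact hfn x hx
  -- integrability of the exponentially weighted norms
  have hEwi : ∀ w : ℝ, IntegrableOn (fun x => Real.exp (-a * |x - w|) * ‖f x‖) (Ioi 0) := by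
    intro w
    refine Integrable.mono' hg₀i
      (((exp_kernel_cont a w).measurable.aestronglyMeasurable).mul hmf.norm) ?_
    filter_upwards [ae_restrict_mem measurableSet_Ioi] with x hx
    have h1 : Real.exp (-a * |x - w|) ≤ 1 :=
      Real.exp_le_one_iff.mpr (by nlinarith [abs_nonneg (x - w)])
    have h0 : (0:ℝ) < Real.exp (-a * |x - w|) := Real.exp_pos _
    rw [Real.norm_eq_abs, abs_of_nonneg (by positivity)]
    nlinarith [norm_nonneg (f x), hfn x hx]
  -- the central estimate
  have hcentral : ∀ w : ℝ, 0 ≤ w →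
      ∫ x in Ioi 0, Real.exp (-a * |x - w|) * ‖f x‖ ≤ M * Real.exp (-β*w) * (4 + Cp) := by
    intro w hw
    set c : ℝ := a - β with hcdef
    have hc0 : 0 < c := by rw [hcdef]; linarith
    have hc2 : 1/2 ≤ c := by rw [hcdef]; linarith
    have hRi : IntegrableOn (fun x : ℝ =>
        M * Real.exp (-β*w) * (Real.exp (-c * |x - w|) + δ⁻¹ * (1 + (x/δ) ^ P)⁻¹))
        (Ioi 0) :=
      ((exp_kernel_integrableOn hc0 hw).add
        ((phiP_integrable hP hδ).const_mul δ⁻¹)).const_mul _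
    have hpt : ∀ x ∈ Ioi (0:ℝ), Real.exp (-a * |x - w|) * ‖f x‖ ≤
        M * Real.exp (-β*w) * (Real.exp (-c * |x - w|) + δ⁻¹ * (1 + (x/δ) ^ P)⁻¹) := by
      intro x hx
      have hx0 : (0:ℝ) < x := hx
      have hq0 : 0 ≤ δ⁻¹ * (1 + (x/δ) ^ P)⁻¹ := by
        have : 0 ≤ (x/δ) ^ P := Real.rpow_nonneg (by positivity) _
        have := inv_nonneg.mpr (by linarith : (0:ℝ) ≤ 1 + (x/δ) ^ P)
        positivity
      have key : Real.exp (-a * |x - w|) * Real.exp (-β*x) ≤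
          Real.exp (-β*w) * Real.exp (-c * |x - w|) := by
        rw [← Real.exp_add, ← Real.exp_add]
        apply Real.exp_le_exp.mpr
        have := neg_abs_le (x - w)
        rw [hcdef]
        nlinarith [abs_nonneg (x - w)]
      have hY1 : Real.exp (-c * |x - w|) ≤ 1 :=
        Real.exp_le_one_iff.mpr (by nlinarith [abs_nonneg (x - w)])
      have hE0 : (0:ℝ) < Real.exp (-β*w) := Real.exp_pos _
      have hXE : Real.exp (-a * |x - w|) * Real.exp (-β*x) ≤ Real.exp (-β*w) := by
        nlinarith
      have hfx := hfn x hx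
      have hk0 : (0:ℝ) < Real.exp (-a * |x - w|) := Real.exp_pos _
      calc Real.exp (-a * |x - w|) * ‖f x‖
          ≤ Real.exp (-a * |x - w|) * (M * Real.exp (-β*x) * (1 + δ⁻¹ * (1 + (x/δ) ^ P)⁻¹)) :=
            mul_le_mul_of_nonneg_left hfx hk0.le
        _ = M * (Real.exp (-a * |x - w|) * Real.exp (-β*x))
              + M * (Real.exp (-a * |x - w|) * Real.exp (-β*x)) * (δ⁻¹ * (1 + (x/δ) ^ P)⁻¹) := by
            ring
        _ ≤ M * (Real.exp (-β*w) * Real.exp (-c * |x - w|))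
              + M * Real.exp (-β*w) * (δ⁻¹ * (1 + (x/δ) ^ P)⁻¹) := by
            refine add_le_add (mul_le_mul_of_nonneg_left key hM) ?_
            exact mul_le_mul_of_nonneg_right (mul_le_mul_of_nonneg_left hXE hM) hq0
        _ = M * Real.exp (-β*w) * (Real.exp (-c * |x - w|) + δ⁻¹ * (1 + (x/δ) ^ P)⁻¹) := by
            ring
    have hmono := setIntegral_mono_on (hEwi w) hRi measurableSet_Ioi hpt
    refine hmono.trans ?_
    rw [integral_const_mul, integral_add (exp_kernel_integrableOn hc0 hw)
      ((phiP_integrable hP hδ).const_mul δ⁻¹), integral_const_mul]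
    have hscale : ∫ x in Ioi (0:ℝ), (1 + (x/δ) ^ P)⁻¹ = δ * Cp := by
      have := integral_comp_mul_right_Ioi (fun y => (1 + y ^ P)⁻¹) 0 (inv_pos.mpr hδ)
      simp only [zero_mul, smul_eq_mul, inv_inv] at this
      rw [hCpdef]
      have heq : ∀ x : ℝ, x / δ = x * δ⁻¹ := fun x => div_eq_mul_inv x δ
      simp_rw [heq]
      rw [this]
      congr 1
      refine setIntegral_congr_fun measurableSet_Ioi (fun y _ => ?_)
      rw [div_one]
    rw [hscale, show δ⁻¹ * (δ * Cp) = Cp by field_simp]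
    have hJ : ∫ x in Ioi 0, Real.exp (-c * |x - w|) ≤ 4 := by
      refine (exp_kernel_integral_le hc0 hw).trans ?_
      rw [div_le_iff₀ hc0]; linarith
    have hprod : (0:ℝ) ≤ M * Real.exp (-β*w) := by positivity
    nlinarith [hCp0]
  -- basic kernel bounds
  have hkabs : ∀ w : ℝ, 0 ≤ w → ∀ x ∈ Ioi (0:ℝ), |k w x| ≤ Real.exp (-a * |x - w|) := by
    intro w hw x hx
    have hx0 : (0:ℝ) < x := hx
    have habs : |x - w| ≤ x + w := abs_sub_le_iff.mpr ⟨by linarith, by linarith⟩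
    have hBA : Real.exp (-a * (x + w)) ≤ Real.exp (-a * |x - w|) :=
      Real.exp_le_exp.mpr (by nlinarith)
    rw [hkdef]
    simp only
    rw [abs_of_nonneg (sub_nonneg.mpr hBA)]
    linarith [Real.exp_pos (-a * (x + w))]
  -- integrability of the integrand defining φ
  have hFint : ∀ w : ℝ, 0 ≤ w → IntegrableOn
      (fun x => (Real.exp (-a * |x - w|) - Real.exp (-a * (x + w))) • f x) (Ioi 0) := by
    intro w hw
    refine Integrable.mono' hg₀i
      (((hkcont w).measurable.aestronglyMeasurable).smul hmf) ?_
    filter_upwards [ae_restrict_mem measurableSet_Ioi] with x hx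
    have h1 := hkabs w hw x hx
    have h2 : Real.exp (-a * |x - w|) ≤ 1 :=
      Real.exp_le_one_iff.mpr (by nlinarith [abs_nonneg (x - w)])
    rw [norm_smul, Real.norm_eq_abs]
    have := hfn x hx
    nlinarith [norm_nonneg (f x), abs_nonneg (k w x)]
  -- bound for |φ w| at a point w ≥ 0
  have hφbound : ∀ w : ℝ, 0 ≤ w → ‖φ w‖ ≤ (1/(2*a)) * (M * Real.exp (-β*w) * (4 + Cp)) := by
    intro w hw
    rw [hφ]
    simp only
    rw [norm_smul, Real.norm_eq_abs, abs_neg, abs_of_pos (by positivity : (0:ℝ) < 1/(2*a))]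
    refine mul_le_mul_of_nonneg_left ?_ (by positivity)
    refine (norm_integral_le_integral_norm _).trans ?_
    have hmono : ∫ x in Ioi (0:ℝ),
        ‖(Real.exp (-a * |x - w|) - Real.exp (-a * (x + w))) • f x‖ ≤
        ∫ x in Ioi 0, Real.exp (-a * |x - w|) * ‖f x‖ := by
      refine setIntegral_mono_on ((hFint w hw).norm) (hEwi w) measurableSet_Ioi ?_
      intro x hx
      rw [norm_smul, Real.norm_eq_abs]
      exact mul_le_mul_of_nonneg_right (hkabs w hw x hx) (norm_nonneg _)
    exact hmono.trans (hcentral w hw)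
  -- derivative via differentiation under the integral sign
  set kd : ℝ → ℝ := fun x =>
    (if z' < x then Real.exp (-a * (x - z')) * a else Real.exp (-a * (z' - x)) * (-a))
      + Real.exp (-a * (x + z')) * a with hkddef
  have hkdmeas : Measurable kd := by
    refine Measurable.add (Measurable.ite measurableSet_Ioi ?_ ?_) ?_
    · exact ((continuous_const.mul (continuous_id.sub continuous_const)).rexp.mul
        continuous_const).measurable
    · exact ((continuous_const.mul (continuous_const.sub continuous_id)).rexp.mul
        continuous_const).measurable
    · exact ((continuous_const.mul (continuous_id.add continuous_const)).rexp.mul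
        continuous_const).measurable
  have hkdabs : ∀ x ∈ Ioi (0:ℝ), |kd x| ≤ 2*a * Real.exp (-a * |x - z'|) := by
    intro x hx
    have hx0 : (0:ℝ) < x := hx
    rw [hkddef]
    simp only
    by_cases h : z' < x
    · rw [if_pos h, abs_of_pos (sub_pos.mpr h)]
      have hle : Real.exp (-a * (x + z')) ≤ Real.exp (-a * (x - z')) :=
        Real.exp_le_exp.mpr (by nlinarith)
      have e1 : (0:ℝ) < Real.exp (-a * (x - z')) := Real.exp_pos _
      have e2 : (0:ℝ) < Real.exp (-a * (x + z')) := Real.exp_pos _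
      rw [abs_of_nonneg (by nlinarith)]
      nlinarith
    · rw [if_neg h]
      push_neg at h
      rw [abs_of_nonpos (by linarith : x - z' ≤ 0)]
      have hle : Real.exp (-a * (x + z')) ≤ Real.exp (-a * (z' - x)) :=
        Real.exp_le_exp.mpr (by nlinarith)
      have e1 : (0:ℝ) < Real.exp (-a * (z' - x)) := Real.exp_pos _
      have e2 : (0:ℝ) < Real.exp (-a * (x + z')) := Real.exp_pos _
      have := abs_add_le (Real.exp (-a * (z' - x)) * (-a)) (Real.exp (-a * (x + z')) * a)
      refine this.trans ?_
      rw [abs_of_nonpos (by nlinarith), abs_of_nonneg (by nlinarith)]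
      rw [show -a * -(x - z') = -a * (z' - x) by ring]
      nlinarith
  have hderiv : Integrable (fun x => kd x • f x) (volume.restrict (Ioi 0)) ∧
      HasDerivAt (fun w => ∫ x in Ioi (0:ℝ),
        (Real.exp (-a * |x - w|) - Real.exp (-a * (x + w))) • f x)
        (∫ x in Ioi (0:ℝ), kd x • f x) z' := by
    have hae_ne : ∀ᵐ x ∂(volume.restrict (Ioi (0:ℝ))), x ≠ z' := by
      refine ae_restrict_of_ae ?_
      rw [ae_iff]
      have hset : {x : ℝ | ¬ x ≠ z'} = {z'} := by ext y; simp
      rw [hset]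
      exact measure_singleton _
    refine hasDerivAt_integral_of_dominated_loc_of_lip (s := Metric.ball z' 1)
      (bound := fun x => 2*a*Real.exp a*‖f x‖) (Metric.ball_mem_nhds z' one_pos)
      (Filter.Eventually.of_forall fun w =>
        (((hkcont w).measurable.aestronglyMeasurable).smul hmf))
      (hFint z' hz') ((hkdmeas.aestronglyMeasurable).smul hmf) ?_
      (hfi.const_mul (2*a*Real.exp a)) ?_
    -- Lipschitz bound
    · filter_upwards [ae_restrict_mem measurableSet_Ioi] with x hx
      have hx0 : (0:ℝ) < x := hx
      rw [lipschitzOnWith_iff_dist_le_mul]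
      intro w1 h1 w2 h2
      have hw1 : z' - 1 < w1 := by
        have := Metric.mem_ball.mp h1
        rw [Real.dist_eq] at this
        have := abs_lt.mp this
        linarith [this.2]
      have hw2 : z' - 1 < w2 := by
        have := Metric.mem_ball.mp h2
        rw [Real.dist_eq] at this
        have := abs_lt.mp this
        linarith [this.2]
      rw [dist_eq_norm, ← sub_smul, norm_smul, Real.norm_eq_abs, Real.dist_eq]
      have hΔ : |k w1 x - k w2 x| ≤ 2*a*Real.exp a * |w1 - w2| := by
        have hsplit : |k w1 x - k w2 x| ≤
            |Real.exp (-a * |x - w1|) - Real.exp (-a * |x - w2|)|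
              + |Real.exp (-a * (x + w1)) - Real.exp (-a * (x + w2))| := by
          rw [hkdef]
          simp only
          rw [sub_sub_sub_comm]
          exact abs_sub _ _
        have hterm1 : |Real.exp (-a * |x - w1|) - Real.exp (-a * |x - w2|)| ≤
            Real.exp a * (a * |w1 - w2|) := by
          have := exp_lip (c := a)
            (by nlinarith [abs_nonneg (x - w1)] : -a * |x - w1| ≤ a)
            (by nlinarith [abs_nonneg (x - w2)] : -a * |x - w2| ≤ a)
          refine this.trans ?_
          refine mul_le_mul_of_nonneg_left ?_ (Real.exp_pos a).le
          have h3 : abs (|x - w1| - |x - w2|) ≤ |w1 - w2| := by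
            have h5 := abs_abs_sub_abs_le_abs_sub (x - w1) (x - w2)
            rw [show x - w1 - (x - w2) = w2 - w1 by ring, abs_sub_comm w2 w1] at h5
            exact h5
          calc abs ((-a) * |x - w1| - (-a) * |x - w2|) = a * abs (|x - w1| - |x - w2|) := by
                rw [show (-a) * |x - w1| - (-a) * |x - w2|
                    = -(a * (|x - w1| - |x - w2|)) by ring,
                  abs_neg, abs_mul, abs_of_pos ha0]
            _ ≤ a * |w1 - w2| := mul_le_mul_of_nonneg_left h3 ha0.le
        have hterm2 : |Real.exp (-a * (x + w1)) - Real.exp (-a * (x + w2))| ≤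
            Real.exp a * (a * |w1 - w2|) := by
          have := exp_lip (c := a)
            (by nlinarith : -a * (x + w1) ≤ a)
            (by nlinarith : -a * (x + w2) ≤ a)
          refine this.trans ?_
          refine mul_le_mul_of_nonneg_left ?_ (Real.exp_pos a).le
          rw [show -a * (x + w1) - -a * (x + w2) = -(a * (w1 - w2)) by ring, abs_neg,
            abs_mul, abs_of_pos ha0]
        calc |k w1 x - k w2 x| ≤ _ := hsplit
          _ ≤ Real.exp a * (a * |w1 - w2|) + Real.exp a * (a * |w1 - w2|) :=
              add_le_add hterm1 hterm2
          _ = 2*a*Real.exp a * |w1 - w2| := by ring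
      have hcoe : ((Real.nnabs (2*a*Real.exp a*‖f x‖)) : ℝ) = 2*a*Real.exp a*‖f x‖ := by
        rw [Real.coe_nnabs, abs_of_nonneg (by positivity)]
      rw [hcoe]
      calc |k w1 x - k w2 x| * ‖f x‖ ≤ (2*a*Real.exp a * |w1 - w2|) * ‖f x‖ :=
            mul_le_mul_of_nonneg_right hΔ (norm_nonneg _)
        _ = 2*a*Real.exp a*‖f x‖ * |w1 - w2| := by ring
    -- pointwise derivative
    · filter_upwards [hae_ne] with x hxne
      have h2 : HasDerivAt (fun w : ℝ => Real.exp (-a * (x + w)))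
          (Real.exp (-a * (x + z')) * (-a)) z' := by
        have hb : HasDerivAt (fun w : ℝ => -a * (x + w)) (-a) z' := by
          simpa using ((hasDerivAt_id z').const_add x).const_mul (-a)
        exact hb.exp
      have h1 : HasDerivAt (fun w : ℝ => Real.exp (-a * |x - w|))
          (if z' < x then Real.exp (-a * (x - z')) * a else Real.exp (-a * (z' - x)) * (-a))
          z' := by
        rcases hxne.lt_or_gt with hlt | hgt
        · -- x < z'
          rw [if_neg (not_lt.mpr hlt.le)]
          have hb : HasDerivAt (fun w : ℝ => -a * (w - x)) (-a) z' := by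
            simpa using ((hasDerivAt_id z').sub_const x).const_mul (-a)
          have hexp := hb.exp
          refine hexp.congr_of_eventuallyEq ?_
          filter_upwards [Ioi_mem_nhds hlt] with w hw
          rw [abs_of_neg (by simpa [sub_neg] using hw : x - w < 0), neg_sub]
        · -- z' < x
          rw [if_pos hgt]
          have hb : HasDerivAt (fun w : ℝ => -a * (x - w)) a z' := by
            simpa using ((hasDerivAt_id z').const_sub x).const_mul (-a)
          have hexp := hb.exp
          rw [show Real.exp (-a * (x - z')) * a = Real.exp (-a*(x - z')) * a from rfl]
          refine HasDerivAt.congr_of_eventuallyEq hexp ?_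
          filter_upwards [Iio_mem_nhds hgt] with w hw
          rw [abs_of_pos (sub_pos.mpr hw)]
      have hsub := (h1.sub h2).smul_const (f x)
      have heq : (if z' < x then Real.exp (-a * (x - z')) * a
          else Real.exp (-a * (z' - x)) * (-a)) - Real.exp (-a * (x + z')) * (-a) = kd x := by
        rw [hkddef]; ring
      rw [heq] at hsub
      exact hsub
  obtain ⟨hF'int, hderivI⟩ := hderiv
  have hφd : HasDerivAt φ
      ((-(1 / (2 * a)) : ℝ) • ∫ x in Ioi (0:ℝ), kd x • f x) z' := by
    rw [hφ]
    exact hderivI.fun_const_smul _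
  have hderiv_bound : ‖deriv φ z'‖ ≤ M * Real.exp (-β*z') * (4 + Cp) := by
    rw [hφd.deriv, norm_smul, Real.norm_eq_abs, abs_neg,
      abs_of_pos (by positivity : (0:ℝ) < 1/(2*a))]
    have hmono : ‖∫ x in Ioi (0:ℝ), kd x • f x‖ ≤
        ∫ x in Ioi 0, (2*a) * (Real.exp (-a * |x - z'|) * ‖f x‖) := by
      refine (norm_integral_le_integral_norm _).trans ?_
      refine setIntegral_mono_on hF'int.norm ((hEwi z').const_mul (2*a))
        measurableSet_Ioi ?_
      intro x hx
      rw [norm_smul, Real.norm_eq_abs]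
      calc |kd x| * ‖f x‖ ≤ (2*a * Real.exp (-a * |x - z'|)) * ‖f x‖ :=
            mul_le_mul_of_nonneg_right (hkdabs x hx) (norm_nonneg _)
        _ = (2*a) * (Real.exp (-a * |x - z'|) * ‖f x‖) := by ring
    have : ∫ x in Ioi (0:ℝ), (2*a) * (Real.exp (-a * |x - z'|) * ‖f x‖) =
        (2*a) * ∫ x in Ioi 0, Real.exp (-a * |x - z'|) * ‖f x‖ := integral_const_mul _ _
    rw [this] at hmono
    have := hcentral z' hz'
    calc (1/(2*a)) * ‖∫ x in Ioi (0:ℝ), kd x • f x‖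
        ≤ (1/(2*a)) * ((2*a) * ∫ x in Ioi 0, Real.exp (-a * |x - z'|) * ‖f x‖) :=
          mul_le_mul_of_nonneg_left hmono (by positivity)
      _ = ∫ x in Ioi 0, Real.exp (-a * |x - z'|) * ‖f x‖ := by field_simp
      _ ≤ M * Real.exp (-β*z') * (4 + Cp) := this
  -- put everything together
  have hexpz : Real.exp (-β*z) * Real.exp (β*z) = 1 := by
    rw [← Real.exp_add]; ring_nf; exact Real.exp_zero
  have hexpz' : Real.exp (-β*z') * Real.exp (β*z') = 1 := by
    rw [← Real.exp_add]; ring_nf; exact Real.exp_zero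
  have hterm1 : a * ‖φ z‖ * Real.exp (β*z) ≤ (1/2) * (M * (4 + Cp)) := by
    have h := hφbound z hz
    have hpos : (0:ℝ) < Real.exp (β*z) := Real.exp_pos _
    calc a * ‖φ z‖ * Real.exp (β*z)
        ≤ a * ((1/(2*a)) * (M * Real.exp (-β*z) * (4 + Cp))) * Real.exp (β*z) := by
          refine mul_le_mul_of_nonneg_right (mul_le_mul_of_nonneg_left h ha0.le) hpos.le
      _ = (1/2) * (M * (4 + Cp)) * (Real.exp (-β*z) * Real.exp (β*z)) := by field_simp
      _ = (1/2) * (M * (4 + Cp)) := by rw [hexpz, mul_one]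
  have hterm2 : ‖deriv φ z'‖ * Real.exp (β*z') ≤ M * (4 + Cp) := by
    have hpos : (0:ℝ) < Real.exp (β*z') := Real.exp_pos _
    calc ‖deriv φ z'‖ * Real.exp (β*z')
        ≤ (M * Real.exp (-β*z') * (4 + Cp)) * Real.exp (β*z') :=
          mul_le_mul_of_nonneg_right hderiv_bound hpos.le
      _ = M * (4 + Cp) * (Real.exp (-β*z') * Real.exp (β*z')) := by ring
      _ = M * (4 + Cp) := by rw [hexpz', mul_one]
  have hfinal : (1/2) * (M * (4 + Cp)) + M * (4 + Cp) ≤ (2*Cp + 9) * M := by nlinarith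
  rw [← hadef] at *
  linarith [hterm1, hterm2]
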